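/- Let M be a finite Markov chain, ψ a set of states, and M_ψ the modification of M making states of ψ and states not reaching ψ absorbing. For every finite path σ of M_ψ whose states all either can reach ψ in M and are not in ψ, except possibly the last one, the cylinder probabilities agree: μ_{M_ψ}(Cyl(σ)) = μ_M(Cyl(σ)) for all σ ∈ FReach(M, s₀, ψ). In particular, the probability of eventually reaching ψ is the same in M and M_ψ. -/

import Mathlib

open scoped ENNReal Classical
open MeasureTheory

namespace CE

variable {S : Type}

/-- Positive-probability transition (edge of the underlying digraph). -/
def edge (P : S → S → ℝ≥0∞) (s t : S) : Prop := 0 < P s t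

/-- Finite path of the Markov chain with transition function `P`, starting at `s`. -/
def IsFPath (P : S → S → ℝ≥0∞) (s : S) (σ : List S) : Prop :=
  σ.head? = some s ∧ σ.Chain' (edge P)

/-- Infinite path of the Markov chain with transition function `P`, starting at `s`. -/
def IsPath (P : S → S → ℝ≥0∞) (s : S) (ω : ℕ → S) : Prop :=
  ω 0 = s ∧ ∀ n, edge P (ω n) (ω (n + 1))

/-- Reachability in the underlying digraph. -/
def Reach (P : S → S → ℝ≥0∞) : S → S → Prop :=
  Relation.ReflTransGen (edge P)

/-- Same strongly connected component. -/
def sccRel (P : S → S → ℝ≥0∞) (s t : S) : Prop :=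
  Reach P s t ∧ Reach P t s

/-- `s` belongs to a nontrivial SCC (more than one state, or a self-loop). -/
def nontriv (P : S → S → ℝ≥0∞) (s : S) : Prop :=
  (∃ t, t ≠ s ∧ sccRel P s t) ∨ edge P s s

/-- Cylinder (cone) of a finite path. -/
def Cyl (ρ : List S) : Set (ℕ → S) := {ω | ∀ i : Fin ρ.length, ω i.1 = ρ.get i}

/-- Finite paths from `s` reaching `A` exactly at their last state. -/
def FReach (P : S → S → ℝ≥0∞) (s : S) (A : Set S) : Set (List S) :=
  {σ | IsFPath P s σ ∧ (∃ h : σ ≠ [], σ.getLast h ∈ A) ∧ ∀ x ∈ σ.dropLast, x ∉ A}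

/-- Infinite sequences that eventually visit `A`. -/
def ReachSet (A : Set S) : Set (ℕ → S) := {ω | ∃ i, ω i ∈ A}

/-- Product of transition probabilities along a finite path. -/
noncomputable def cylProb (P : S → S → ℝ≥0∞) (d : S) (ρ : List S) : ℝ≥0∞ :=
  ∏ i ∈ Finset.range (ρ.length - 1), P (ρ.getD i d) (ρ.getD (i + 1) d)

/-- `σ ⪯_f ω`: subsequence embedding satisfying freshness and inertia w.r.t. `r`. -/
structure Embeds (r : S → S → Prop) (σ : List S) (ω : ℕ → S) (f : ℕ → ℕ) : Prop where
  mono : ∀ i j, i < j → j < σ.length → f i < f j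
  agree : ∀ i : Fin σ.length, σ.get i = ω (f i.1)
  fresh : ∀ i < σ.length, ∀ j < f i, ¬ r (ω (f i)) (ω j)
  inertia : ∀ i, i + 1 < σ.length → ∀ j, f i < j → j < f (i + 1) → r (ω (f i)) (ω j)

/-- There is a path from `s` to `t` staying in the SCC of `s` until `t`. -/
def exitReach (P : S → S → ℝ≥0∞) (s t : S) : Prop :=
  ∃ l : List S, List.Chain (edge P) s (l ++ [t]) ∧ ∀ u ∈ s :: l, sccRel P s u

/-- The SCC of `s` has no output states. -/
def noOut (P : S → S → ℝ≥0∞) (s : S) : Prop :=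
  ∀ u t, sccRel P s u → edge P u t → sccRel P s t

/-- Edges of the acyclic reduction. -/
def AcEdge (P : S → S → ℝ≥0∞) (s t : S) : Prop :=
  (¬ nontriv P s ∧ edge P s t) ∨
  (nontriv P s ∧ ¬ sccRel P s t ∧ exitReach P s t) ∨
  (nontriv P s ∧ t = s ∧ noOut P s)

/-- States of the acyclic reduction: states outside nontrivial SCCs and input states. -/
def AcState (P : S → S → ℝ≥0∞) (s : S) : Prop :=
  ¬ nontriv P s ∨ ∃ t, ¬ sccRel P s t ∧ edge P t s

/-- A rail: a finite path of the acyclic reduction starting at `s0`. -/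
def IsRail (P : S → S → ℝ≥0∞) (s0 : S) (σ : List S) : Prop :=
  σ.head? = some s0 ∧ σ.Chain' (AcEdge P) ∧ ∀ x ∈ σ, AcState P x

/-- The torrent of a rail `σ`: infinite paths into which `σ` embeds. -/
def Torr (P : S → S → ℝ≥0∞) (r : S → S → Prop) (s0 : S) (σ : List S) : Set (ℕ → S) :=
  {ω | IsPath P s0 ω ∧ ∃ f, Embeds r σ ω f}

def toSeq (d : S) (ρ : List S) : ℕ → S := fun n => ρ.getD n d

/-- Torrent generators: finite paths `ρ` with an embedding of `σ` ending at the last state. -/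
def Gen (P : S → S → ℝ≥0∞) (r : S → S → Prop) (s0 : S) (σ : List S) : Set (List S) :=
  {ρ | IsFPath P s0 ρ ∧ ρ ≠ [] ∧ ∃ f, Embeds r σ (toSeq s0 ρ) f ∧
    (∀ i < σ.length, f i < ρ.length) ∧ f (σ.length - 1) = ρ.length - 1}

/-- Finite paths from `t` to `s` staying in the SCC of `t` except the final state `s`. -/
def ExitPaths (P : S → S → ℝ≥0∞) (t s : S) : Set (List S) :=
  {π | π.head? = some t ∧ (∃ h : π ≠ [], π.getLast h = s) ∧ π.Chain' (edge P) ∧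
    ∀ u ∈ π.dropLast, sccRel P t u}

/-- `M_ψ`: make absorbing all states of `A` and all states not reaching `A`. -/
noncomputable def absP (P : S → S → ℝ≥0∞) (A : Set S) : S → S → ℝ≥0∞ := fun s t =>
  if s ∈ A ∨ ¬ ∃ a ∈ A, Reach P s a then (if t = s then 1 else 0) else P s t

/-- Absorbing state. -/
def Absorbing (P : S → S → ℝ≥0∞) (s : S) : Prop :=
  P s s = 1 ∧ ∀ t, t ≠ s → P s t = 0

/-- Output states of the SCC of `k`. -/
def OutK (P : S → S → ℝ≥0∞) (k : S) : Set S :=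
  {t | ¬ sccRel P k t ∧ ∃ u, sccRel P k u ∧ edge P u t}

/-- The chain `M_K` of the SCC of `k`, with the output states made absorbing. -/
noncomputable def PK (P : S → S → ℝ≥0∞) (k : S) : S → S → ℝ≥0∞ := fun s t =>
  if sccRel P k s then P s t else (if t = s then 1 else 0)

/-- Absorbing state of the acyclic reduction: its only edge is a self-loop. -/
def AcAbsorbing (P : S → S → ℝ≥0∞) (s : S) : Prop :=
  AcEdge P s s ∧ ∀ t, AcEdge P s t → t = s


/-! ### Auxiliary lemmas for Statement 8 -/

lemma cyl_measurable [MeasurableSpace S] [MeasurableSingletonClass S] (ρ : List S) :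
    MeasurableSet (Cyl ρ) := by
  have h : Cyl ρ = ⋂ i : Fin ρ.length, (fun ω : ℕ → S => ω i.1) ⁻¹' {ρ.get i} := by
    ext ω; simp [Cyl]
  rw [h]
  exact MeasurableSet.iInter fun i =>
    (measurable_pi_apply _) (measurableSet_singleton _)

lemma chain'_edge {P : S → S → ℝ≥0∞} {ρ : List S} (h : ρ.Chain' (edge P))
    {i : ℕ} (hi : i + 1 < ρ.length) :
    edge P (ρ[i]'(by omega)) (ρ[i + 1]'hi) := by
  have := List.isChain_iff_getElem.mp h i hi
  simpa [List.get_eq_getElem] using this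

lemma chain'_reach {P : S → S → ℝ≥0∞} {ρ : List S} (h : ρ.Chain' (edge P))
    {i j : ℕ} (hij : i ≤ j) (hj : j < ρ.length) :
    Reach P (ρ[i]'(lt_of_le_of_lt hij hj)) (ρ[j]'hj) := by
  induction hij with
  | refl => exact Relation.ReflTransGen.refl
  | @step m hm ih =>
      exact (ih (by omega)).tail (chain'_edge h hj)

lemma mem_dropLast' {ρ : List S} {i : ℕ} (h : i + 1 < ρ.length) :
    ρ[i]'(by omega) ∈ ρ.dropLast := by
  have h1 : i < ρ.dropLast.length := by
    rw [List.length_dropLast]; omega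
  have h2 : ρ.dropLast[i]'h1 = ρ[i]'(by omega) := List.getElem_dropLast h1
  rw [← h2]
  exact List.getElem_mem h1

lemma cylProb_append (P : S → S → ℝ≥0∞) (d : S) (ρ : List S) (h : ρ ≠ []) (t : S) :
    cylProb P d (ρ ++ [t]) = cylProb P d ρ * P (ρ.getLast h) t := by
  have hl : ρ.length ≠ 0 := fun h0 => h (List.length_eq_zero_iff.mp h0)
  unfold cylProb
  rw [List.length_append]
  simp only [List.length_singleton]
  have he : ρ.length + 1 - 1 = (ρ.length - 1) + 1 := by omega
  rw [he, Finset.prod_range_succ]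
  congr 1
  · apply Finset.prod_congr rfl
    intro i hi; rw [Finset.mem_range] at hi
    rw [List.getD_append _ _ _ _ (by omega), List.getD_append _ _ _ _ (by omega)]
  · rw [List.getD_append _ _ _ _ (by omega),
        List.getD_append_right _ _ _ _ (by omega)]
    congr 1
    · rw [List.getD_eq_getElem _ _ (by omega), List.getLast_eq_getElem]
    · have h0 : ρ.length - 1 + 1 - ρ.length = 0 := by omega
      rw [h0]; rfl

lemma cylProb_pos {P : S → S → ℝ≥0∞} {d : S} {ρ : List S} (h : ρ.Chain' (edge P)) :
    0 < cylProb P d ρ := by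
  unfold cylProb
  rw [CanonicallyOrderedAdd.prod_pos]
  intro i hi; rw [Finset.mem_range] at hi
  have h1 : i + 1 < ρ.length := by omega
  rw [List.getD_eq_getElem _ _ (by omega), List.getD_eq_getElem _ _ h1]
  exact chain'_edge h h1

lemma freach_state {P : S → S → ℝ≥0∞} {s0 : S} {A : Set S} {ρ : List S}
    (hρ : ρ ∈ FReach P s0 A) {i : ℕ} (hi : i + 1 < ρ.length) :
    absP P A (ρ[i]'(by omega)) = P (ρ[i]'(by omega)) := by
  obtain ⟨⟨hh, hc⟩, ⟨hne, hlast⟩, hdrop⟩ := hρ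
  have hA : ρ[i]'(by omega) ∉ A := hdrop _ (mem_dropLast' hi)
  have hreach : ∃ a ∈ A, Reach P (ρ[i]'(by omega)) a := by
    refine ⟨ρ.getLast hne, hlast, ?_⟩
    rw [List.getLast_eq_getElem]
    exact chain'_reach hc (by omega) (by omega)
  funext u
  simp [absP, hA, hreach]

lemma freach_fpath {P : S → S → ℝ≥0∞} {s0 : S} {A : Set S} {ρ : List S}
    (hρ : ρ ∈ FReach P s0 A) : IsFPath (absP P A) s0 ρ := by
  refine ⟨hρ.1.1, ?_⟩
  have hc := hρ.1.2
  simp only [List.Chain', List.isChain_iff_getElem] at hc ⊢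
  intro i hi
  have h1 : i + 1 < ρ.length := by omega
  try simp only [List.get_eq_getElem]
  unfold edge
  rw [freach_state hρ h1]
  exact hc i hi

lemma freach_cylProb {P : S → S → ℝ≥0∞} {s0 : S} {A : Set S} {ρ : List S}
    (hρ : ρ ∈ FReach P s0 A) :
    cylProb (absP P A) s0 ρ = cylProb P s0 ρ := by
  unfold cylProb
  apply Finset.prod_congr rfl
  intro i hi; rw [Finset.mem_range] at hi
  have h1 : i + 1 < ρ.length := by omega
  rw [List.getD_eq_getElem _ _ (by omega)]
  rw [freach_state hρ h1]

lemma freach_prefix_eq {P : S → S → ℝ≥0∞} {s0 : S} {A : Set S} {ρ ρ' : List S}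
    (h1 : ρ ∈ FReach P s0 A) (h2 : ρ' ∈ FReach P s0 A)
    {ω : ℕ → S} (hω : ω ∈ Cyl ρ) (hω' : ω ∈ Cyl ρ') (hle : ρ.length ≤ ρ'.length) :
    ρ = ρ' := by
  obtain ⟨_, ⟨hne, hlast⟩, _⟩ := h1
  obtain ⟨_, _, hdrop'⟩ := h2
  have hl : 0 < ρ.length := List.length_pos_iff.mpr hne
  have hget : ∀ i (h : i < ρ.length), ρ[i]'h = ρ'[i]'(by omega) := by
    intro i h
    have e1 := hω ⟨i, h⟩
    have e2 := hω' ⟨i, by omega⟩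
    simp only [List.get_eq_getElem] at e1 e2
    rw [← e1, ← e2]
  rcases eq_or_lt_of_le hle with heq | hlt
  · exact List.ext_getElem heq fun i hi hi' => hget i hi
  · exfalso
    have hmem : ρ'[ρ.length - 1]'(by omega) ∈ ρ'.dropLast :=
      mem_dropLast' (by omega)
    apply hdrop' _ hmem
    rw [← hget (ρ.length - 1) (by omega), ← List.getLast_eq_getElem]
    exact hlast

lemma freach_disjoint {P : S → S → ℝ≥0∞} {s0 : S} {A : Set S} {ρ ρ' : List S}
    (h1 : ρ ∈ FReach P s0 A) (h2 : ρ' ∈ FReach P s0 A) (hne : ρ ≠ ρ') :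
    Disjoint (Cyl ρ) (Cyl ρ') := by
  rw [Set.disjoint_left]
  intro ω hω hω'
  rcases le_total ρ.length ρ'.length with h | h
  · exact hne (freach_prefix_eq h1 h2 hω hω' h)
  · exact hne (freach_prefix_eq h2 h1 hω' hω h).symm

lemma cyl_append_subset (ρ : List S) (t : S) : Cyl (ρ ++ [t]) ⊆ Cyl ρ := by
  intro ω hω i
  have := hω ⟨i.1, by simp only [List.length_append, List.length_singleton]; omega⟩
  simp only [List.get_eq_getElem] at this ⊢
  rw [this, List.getElem_append_left]

lemma succ_countable [MeasurableSpace S] [MeasurableSingletonClass S]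
    {P : S → S → ℝ≥0∞} {s0 : S} (μ : Measure (ℕ → S))
    (hμ : ∀ ρ, IsFPath P s0 ρ → μ (Cyl ρ) = cylProb P s0 ρ)
    {ρ : List S} (hρ : IsFPath P s0 ρ) (hne : ρ ≠ []) (hfin : cylProb P s0 ρ ≠ ⊤) :
    {t | 0 < P (ρ.getLast hne) t}.Countable := by
  set s := ρ.getLast hne with hs
  have hpos : 0 < cylProb P s0 ρ := cylProb_pos hρ.2
  have key : ∀ F : Finset S, (∀ t ∈ F, 0 < P s t) → ∑ t ∈ F, P s t ≤ 1 := by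
    intro F hF
    have hpath : ∀ t ∈ F, IsFPath P s0 (ρ ++ [t]) := by
      intro t ht
      refine ⟨by rw [List.head?_append_of_ne_nil _ hne]; exact hρ.1, ?_⟩
      refine List.isChain_append.mpr ⟨hρ.2, List.isChain_singleton t, ?_⟩
      intro x hx y hy
      rw [List.getLast?_eq_getLast hne, Option.mem_some_iff] at hx
      simp only [List.head?_cons, Option.mem_some_iff] at hy
      rw [← hx, ← hy]
      exact hF t ht
    have hdisj : (F : Set S).PairwiseDisjoint (fun t => Cyl (ρ ++ [t])) := by
      intro t _ t' _ hneq
      rw [Function.onFun, Set.disjoint_left]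
      intro ω hω hω'
      have e1 := hω ⟨ρ.length, by simp⟩
      have e2 := hω' ⟨ρ.length, by simp⟩
      simp only [List.get_eq_getElem, List.getElem_concat_length] at e1 e2
      exact hneq (e1 ▸ e2)
    have hsum := measure_biUnion_finset (μ := μ) hdisj (fun t _ => cyl_measurable _)
    have hle : ∑ t ∈ F, cylProb P s0 ρ * P s t ≤ cylProb P s0 ρ := by
      calc ∑ t ∈ F, cylProb P s0 ρ * P s t
          = ∑ t ∈ F, μ (Cyl (ρ ++ [t])) := by
            refine Finset.sum_congr rfl fun t ht => ?_
            rw [hμ _ (hpath t ht), cylProb_append P s0 ρ hne t]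
        _ = μ (⋃ t ∈ F, Cyl (ρ ++ [t])) := hsum.symm
        _ ≤ μ (Cyl ρ) := by
            refine measure_mono ?_
            simp only [Set.iUnion_subset_iff]
            exact fun t _ => cyl_append_subset ρ t
        _ = cylProb P s0 ρ := hμ ρ hρ
    rw [← Finset.mul_sum] at hle
    have hle' : cylProb P s0 ρ * (∑ t ∈ F, P s t) ≤ cylProb P s0 ρ * 1 := by
      simpa using hle
    exact (ENNReal.mul_le_mul_iff_right hpos.ne' hfin).mp hle'
  have key' : ∀ F : Finset S, ∑ t ∈ F, P s t ≤ 1 := by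
    intro F
    rw [← Finset.sum_filter_ne_zero]
    apply key
    intro t ht
    rw [Finset.mem_filter] at ht
    exact pos_iff_ne_zero.mpr ht.2
  have htsum : ∑' t, P s t ≠ ⊤ := by
    rw [ENNReal.tsum_eq_iSup_sum]
    exact ne_top_of_le_ne_top (by simp) (iSup_le key')
  have := Summable.countable_support_ennreal htsum
  apply this.mono
  intro t ht
  exact pos_iff_ne_zero.mp ht

lemma gset_countable [MeasurableSpace S] [MeasurableSingletonClass S]
    {P : S → S → ℝ≥0∞} {s0 : S} (μ : Measure (ℕ → S))
    (hμ : ∀ ρ, IsFPath P s0 ρ → μ (Cyl ρ) = cylProb P s0 ρ) (n : ℕ) :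
    {ρ : List S | IsFPath P s0 ρ ∧ ρ.length = n ∧ cylProb P s0 ρ ≠ ⊤}.Countable := by
  induction n with
  | zero =>
      apply Set.Countable.mono _ (Set.countable_singleton ([] : List S))
      intro ρ hρ
      exact List.length_eq_zero_iff.mp hρ.2.1
  | succ n ih =>
      rcases Nat.eq_zero_or_pos n with h0 | hn
      · subst h0
        apply Set.Countable.mono _ (Set.countable_singleton ([s0] : List S))
        intro ρ hρ
        obtain ⟨a, rfl⟩ := List.length_eq_one_iff.mp hρ.2.1
        have := hρ.1.1
        simp only [List.head?_cons, Option.some_inj] at this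
        simp [this]
      · have hcnt : (⋃ τ ∈ {ρ : List S | IsFPath P s0 ρ ∧ ρ.length = n ∧ cylProb P s0 ρ ≠ ⊤},
            (fun t => τ ++ [t]) '' {t | 0 < P (τ.getLastD s0) t}).Countable := by
          refine Set.Countable.biUnion ih fun τ hτ => ?_
          have hτne : τ ≠ [] := by
            intro h; rw [h] at hτ; simp at hτ; omega
          have hgl : τ.getLastD s0 = τ.getLast hτne := by
            rw [List.getLastD_eq_getLast?, List.getLast?_eq_getLast hτne]; rfl
          rw [hgl]
          exact (succ_countable μ hμ hτ.1 hτne hτ.2.2).image _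
        apply Set.Countable.mono _ hcnt
        intro ρ hρ
        obtain ⟨⟨hh, hc⟩, hlen, hfin⟩ := hρ
        have hne : ρ ≠ [] := by intro h; rw [h] at hlen; simp at hlen
        set τ := ρ.dropLast with hτ
        have hτlen : τ.length = n := by rw [hτ, List.length_dropLast, hlen]; omega
        have hτne : τ ≠ [] := by
          intro h; rw [h] at hτlen; simp at hτlen; omega
        have hsplit : τ ++ [ρ.getLast hne] = ρ := List.dropLast_append_getLast hne
        have hτhead : τ.head? = some s0 := by
          rw [← hsplit] at hh
          rwa [List.head?_append_of_ne_nil _ hτne] at hh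
        have hτchain : τ.Chain' (edge P) := hc.prefix (List.dropLast_prefix ρ)
        have hc' : List.Chain' (edge P) (τ ++ [ρ.getLast hne]) := by
          rw [hsplit]; exact hc
        have hedge : edge P (τ.getLast hτne) (ρ.getLast hne) := by
          have h3 := (List.isChain_append.mp hc').2.2
          refine h3 _ ?_ _ rfl
          rw [List.getLast?_eq_getLast hτne]; rfl
        have hτfin : cylProb P s0 τ ≠ ⊤ := by
          intro htop
          apply hfin
          rw [← hsplit, cylProb_append P s0 τ hτne, htop, ENNReal.top_mul hedge.ne']
        have hgl : τ.getLastD s0 = τ.getLast hτne := by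
          rw [List.getLastD_eq_getLast?, List.getLast?_eq_getLast hτne]; rfl
        refine Set.mem_biUnion (show τ ∈ _ from ⟨⟨hτhead, hτchain⟩, hτlen, hτfin⟩) ?_
        exact ⟨ρ.getLast hne, by rw [hgl]; exact hedge, hsplit⟩

/-- cylinder probabilities of paths in `FReach(M, s₀, ψ)` agree in `M`
and `M_ψ`; in particular the probability of eventually reaching `ψ` is the same. -/
theorem absP_preserves_reach_prob [MeasurableSpace S] [MeasurableSingletonClass S]
    (P : S → S → ℝ≥0∞) (s0 : S) (A : Set S)
    (μ ν : Measure (ℕ → S))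
    (hμ : ∀ ρ, IsFPath P s0 ρ → μ (Cyl ρ) = cylProb P s0 ρ)
    (hν : ∀ ρ, IsFPath (absP P A) s0 ρ → ν (Cyl ρ) = cylProb (absP P A) s0 ρ) :
    (∀ ρ ∈ FReach P s0 A, ν (Cyl ρ) = μ (Cyl ρ)) ∧
    ν (⋃ ρ ∈ FReach P s0 A, Cyl ρ) = μ (⋃ ρ ∈ FReach P s0 A, Cyl ρ) := by
  have part1 : ∀ ρ ∈ FReach P s0 A, ν (Cyl ρ) = μ (Cyl ρ) := by
    intro ρ hρ
    rw [hν ρ (freach_fpath hρ), hμ ρ hρ.1, freach_cylProb hρ]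
  refine ⟨part1, ?_⟩
  by_cases hfin : ∀ ρ ∈ FReach P s0 A, cylProb P s0 ρ ≠ ⊤
  · have hcnt : (FReach P s0 A).Countable := by
      apply Set.Countable.mono _ (Set.countable_iUnion (gset_countable μ hμ))
      intro ρ hρ
      exact Set.mem_iUnion.mpr ⟨ρ.length, hρ.1, rfl, hfin ρ hρ⟩
    have hd : (FReach P s0 A).PairwiseDisjoint Cyl :=
      fun ρ h1 ρ' h2 hne => freach_disjoint h1 h2 hne
    rw [measure_biUnion hcnt hd (fun ρ _ => cyl_measurable ρ),
        measure_biUnion hcnt hd (fun ρ _ => cyl_measurable ρ)]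
    exact tsum_congr fun ρ => part1 ρ.1 ρ.2
  · push_neg at hfin
    obtain ⟨ρ, hρ, htop⟩ := hfin
    have hμtop : μ (Cyl ρ) = ⊤ := by rw [hμ ρ hρ.1, htop]
    have hνtop : ν (Cyl ρ) = ⊤ := by rw [part1 ρ hρ, hμtop]
    have hsub : Cyl ρ ⊆ ⋃ ρ ∈ FReach P s0 A, Cyl ρ := Set.subset_biUnion_of_mem hρ
    have h1 : μ (⋃ ρ ∈ FReach P s0 A, Cyl ρ) = ⊤ :=
      top_le_iff.mp (hμtop ▸ measure_mono hsub)
    have h2 : ν (⋃ ρ ∈ FReach P s0 A, Cyl ρ) = ⊤ :=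
      top_le_iff.mp (hνtop ▸ measure_mono hsub)
    rw [h1, h2]

end CE
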